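/- For p ≥ 2 and r ≥ 1, the radius of OΓ_n^{(p,r)} equals ⌈nr/(pr+1)⌉, and 0^n is a central vertex. -/

import Mathlib

/-- Hamming distance between two binary words (as lists). -/
def hdist (u v : List Bool) : ℕ := (List.zipWith bne u v).count true

/-- `w` is an I-Fibonacci (p,r)-code: no factor `1^(r+1)` and no factor `1 0^s 1` with `s < p`
(equivalently: maximal blocks of 1s have length ≤ r and blocks of 1s are separated by ≥ p zeros). -/
def ICode (p r : ℕ) (w : List Bool) : Prop :=
  ¬ (List.replicate (r + 1) true <:+: w) ∧
  ∀ s < p, ¬ ((true :: (List.replicate s false ++ [true])) <:+: w)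

/-- `w` is an O-Fibonacci (p,r)-code: no factor `(10^(p-1))^r 1` and no factor `1 0^s 1`
with `s ≤ p - 2`. -/
def OCode (p r : ℕ) (w : List Bool) : Prop :=
  ¬ (((List.replicate r (true :: List.replicate (p - 1) false)).flatten ++ [true]) <:+: w) ∧
  ∀ s, s + 2 ≤ p → ¬ ((true :: (List.replicate s false ++ [true])) <:+: w)

/-- Vertex type of the I-Fibonacci (p,r)-cube of dimension n. -/
def IVert (p r n : ℕ) := {w : List Bool // w.length = n ∧ ICode p r w}

/-- Vertex type of the O-Fibonacci (p,r)-cube of dimension n. -/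
def OVert (p r n : ℕ) := {w : List Bool // w.length = n ∧ OCode p r w}

/-- The I-Fibonacci (p,r)-cube: vertices adjacent iff they differ in exactly one coordinate. -/
def IGraph (p r n : ℕ) : SimpleGraph (IVert p r n) :=
  SimpleGraph.fromRel (fun u v => hdist u.1 v.1 = 1)

/-- The O-Fibonacci (p,r)-cube. -/
def OGraph (p r n : ℕ) : SimpleGraph (OVert p r n) :=
  SimpleGraph.fromRel (fun u v => hdist u.1 v.1 = 1)

/-- Eccentricity of a vertex. -/
noncomputable def ecc {V : Type*} (G : SimpleGraph V) (v : V) : ℕ :=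
  sSup {d | ∃ u, G.dist v u = d}

/-- Radius of a graph. -/
noncomputable def grad {V : Type*} (G : SimpleGraph V) : ℕ :=
  sInf {e | ∃ v, ecc G v = e}

/-- Diameter of a graph. -/
noncomputable def gdiam {V : Type*} (G : SimpleGraph V) : ℕ :=
  sSup {d | ∃ u v, G.dist u v = d}

/-- Degree of a vertex (number of neighbours). -/
noncomputable def deg {V : Type*} (G : SimpleGraph V) (v : V) : ℕ :=
  {u | G.Adj v u}.ncard

namespace OGR

def chi (p r x : ℕ) : Bool := decide (x % (p*r+1) % p = 0 ∧ x % (p*r+1) < p*r)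

def word (p r j n : ℕ) : List Bool := (List.range n).map (fun i => chi p r (i + j))


lemma cid2 (p r c : ℕ) (hp : 2 ≤ p) (hr : 1 ≤ r) (hc : c ≤ p * r) :
    (c * r + p * r) / (p * r + 1) = (c + p - 1) / p := by
  have hp0 : 0 < p := by omega
  have hN : 0 < p * r + 1 := by positivity
  obtain ⟨a, ha⟩ : ∃ a, a = (c + p - 1) / p := ⟨_, rfl⟩
  rw [← ha]
  have hdm := Nat.div_add_mod (c + p - 1) p
  rw [← ha] at hdm
  have hm : (c + p - 1) % p < p := Nat.mod_lt _ hp0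
  have h1 : p * a ≤ c + p - 1 := by omega
  have h2 : c + p - 1 < p * a + p := by omega
  have har : a ≤ r := by
    have hx : p * (r + 1) = p * r + p := by ring
    have : p * a < p * (r + 1) := by omega
    have := Nat.lt_of_mul_lt_mul_left this
    omega
  have hca : c ≤ p * a := by omega
  refine le_antisymm ?_ ?_
  · rw [Nat.div_le_iff_le_mul_add_pred hN]
    have hcr : c * r ≤ r * (p * a) := by
      calc c * r = r * c := by ring
        _ ≤ r * (p * a) := Nat.mul_le_mul_left r hca
    have he1 : (p * r + 1) * a = r * (p * a) + a := by ring
    have he2 : p * r + 1 - 1 = p * r := by omega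
    omega
  · rw [Nat.le_div_iff_mul_le hN]
    have h3 : r * (p * a) + r ≤ r * c + r * p := by
      have h4 : p * a + 1 ≤ c + p := by omega
      calc r * (p * a) + r = r * (p * a + 1) := by ring
        _ ≤ r * (c + p) := Nat.mul_le_mul_left r h4
        _ = r * c + r * p := by ring
    have he1 : a * (p * r + 1) = r * (p * a) + a := by ring
    have hcr : r * c = c * r := by ring
    have hpr : r * p = p * r := by ring
    omega

lemma prpr_div (p r : ℕ) (hp : 2 ≤ p) (hr : 1 ≤ r) :
    (p * r * r + p * r) / (p * r + 1) = r := by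
  have hN : 0 < p * r + 1 := by positivity
  have hrpr : r ≤ p * r := Nat.le_mul_of_pos_left r (by omega)
  have h : p * r * r + p * r = (p * r + 1) * r + (p * r - r) := by
    have : (p * r + 1) * r = p * r * r + r := by ring
    omega
  rw [h, Nat.mul_add_div hN, Nat.div_eq_of_lt (by omega)]
  omega


lemma Astep (p r : ℕ) (hp : 2 ≤ p) (hr : 1 ≤ r) (n : ℕ) :
    ((n + 1) * r + p * r) / (p * r + 1)
      = (n * r + p * r) / (p * r + 1) + (if chi p r n = true then 1 else 0) := by
  have hp0 : 0 < p := by omega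
  have hN : 0 < p * r + 1 := by positivity
  set N := p * r + 1 with hNdef
  obtain ⟨q, c, hqc, hcN⟩ : ∃ q c, n = N * q + c ∧ c < N :=
    ⟨n / N, n % N, by rw [Nat.div_add_mod], Nat.mod_lt _ hN⟩
  have hmod : n % N = c := by rw [hqc]; simp [Nat.mul_add_mod, Nat.mod_eq_of_lt hcN]
  have hchi : chi p r n = decide (c % p = 0 ∧ c < p * r) := by
    simp only [chi, ← hNdef, hmod]
  have hA : (n * r + p * r) / N = q * r + (c * r + p * r) / N := by
    have : n * r + p * r = N * (q * r) + (c * r + p * r) := by rw [hqc]; ring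
    rw [this, Nat.mul_add_div hN]
  rcases Nat.lt_or_ge c (p * r) with hcpr | hcpr
  · -- c < p * r
    have hn1 : n + 1 = N * q + (c + 1) := by omega
    have hA1 : ((n + 1) * r + p * r) / N = q * r + ((c + 1) * r + p * r) / N := by
      have : (n + 1) * r + p * r = N * (q * r) + ((c + 1) * r + p * r) := by rw [hn1]; ring
      rw [this, Nat.mul_add_div hN]
    rw [hA1, hA, cid2 p r (c + 1) hp hr (by omega), cid2 p r c hp hr (by omega)]
    have hstep : (c + 1 + p - 1) / p = (c + p - 1) / p + (if c % p = 0 then 1 else 0) := by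
      rcases c with _ | c'
      · simp [Nat.div_eq_of_lt (by omega : p - 1 < p),
          show 0 + 1 + p - 1 = p by omega, Nat.div_self hp0]
      · have e1 : c' + 1 + 1 + p - 1 = (c' + 1) + p := by omega
        have e2 : c' + 1 + p - 1 = c' + p := by omega
        have hiff : (p ∣ c' + 1) ↔ ((c' + 1) % p = 0) := Nat.dvd_iff_mod_eq_zero
        rw [e1, e2, Nat.add_div_right _ hp0, Nat.add_div_right _ hp0, Nat.succ_div]
        by_cases hdvd : p ∣ c' + 1
        · rw [if_pos hdvd, if_pos (hiff.mp hdvd)]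
        · rw [if_neg hdvd, if_neg (fun h => hdvd (hiff.mpr h))]
    rw [hstep, hchi]
    simp only [decide_eq_true_eq]
    by_cases hcp : c % p = 0
    · rw [if_pos hcp, if_pos (show c % p = 0 ∧ c < p * r from ⟨hcp, hcpr⟩)]
      exact (Nat.add_assoc _ _ _).symm
    · rw [if_neg hcp, if_neg (show ¬(c % p = 0 ∧ c < p * r) from fun h => hcp h.1)]
      simp [Nat.add_assoc]
  · -- c = p * r
    have hce : c = p * r := by omega
    have hNq : N * (q + 1) = N * q + N := by ring
    have hn1 : n + 1 = N * (q + 1) := by omega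
    have hA1 : ((n + 1) * r + p * r) / N = (q + 1) * r := by
      have : (n + 1) * r + p * r = N * ((q + 1) * r) + p * r := by rw [hn1]; ring
      rw [this, Nat.mul_add_div hN, Nat.div_eq_of_lt (by omega), Nat.add_zero]
    rw [hA1, hA, hchi, hce, prpr_div p r hp hr]
    rw [if_neg (by simp : ¬(decide (p * r % p = 0 ∧ p * r < p * r) = true))]
    ring


lemma word_count (p r n : ℕ) (hp : 2 ≤ p) (hr : 1 ≤ r) :
    (word p r 0 n).count true = (n * r + p * r) / (p * r + 1) := by
  induction n with
  | zero =>
    rw [Nat.zero_mul, Nat.zero_add, Nat.div_eq_of_lt (Nat.lt_succ_self _)]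
    simp [word]
  | succ m ih =>
    rw [word, List.range_succ, List.map_append, List.count_append,
      show ((List.range m).map (fun i => chi p r (i + 0))) = word p r 0 m from rfl, ih,
      Astep p r hp hr m]
    congr 1
    cases h : chi p r m <;> simp [h]



lemma count_zipWith_bne_self (t : List Bool) : (List.zipWith bne t t).count true = 0 := by
  induction t with
  | nil => simp
  | cons a t ih => cases a <;> simpa [List.count_cons] using ih

lemma hdist_comm (u v : List Bool) : hdist u v = hdist v u := by
  induction u generalizing v with
  | nil => cases v <;> simp [hdist]
  | cons a u ih =>
    cases v with
    | nil => simp [hdist]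
    | cons b v =>
      have h := ih v
      simp only [hdist, List.zipWith_cons_cons, List.count_cons] at *
      cases a <;> cases b <;> simp_all

lemma hdist_triangle (u v w : List Bool) (h1 : u.length = v.length) (h2 : v.length = w.length) :
    hdist u w ≤ hdist u v + hdist v w := by
  induction u generalizing v w with
  | nil => simp [hdist]
  | cons a u ih =>
    cases v with
    | nil => simp at h1
    | cons b v =>
      cases w with
      | nil => simp at h2
      | cons c w =>
        simp only [List.length_cons, Nat.add_right_cancel_iff] at h1 h2
        have htr := ih v w h1 h2
        simp only [hdist] at htr ⊢
        simp only [List.zipWith_cons_cons, List.count_cons]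
        cases a <;> cases b <;> cases c <;> simp <;> omega

lemma hdist_replicate_false (u : List Bool) (n : ℕ) (h : u.length = n) :
    hdist (List.replicate n false) u = u.count true := by
  induction u generalizing n with
  | nil => subst h; simp [hdist]
  | cons a u ih =>
    subst h
    simp only [List.length_cons, List.replicate_succ]
    have := ih u.length rfl
    simp only [hdist, List.zipWith_cons_cons, List.count_cons] at *
    cases a <;> simp_all

lemma hdist_ne_zero_of_ne {u v : List Bool} (h : u.length = v.length) (hne : u ≠ v) :
    hdist u v ≠ 0 := by
  induction u generalizing v with
  | nil => cases v with | nil => exact absurd rfl hne | cons b v => simp at h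
  | cons a u ih =>
    cases v with
    | nil => simp at h
    | cons b v =>
      simp only [List.length_cons, Nat.add_right_cancel_iff] at h
      simp only [hdist, List.zipWith_cons_cons, List.count_cons]
      by_cases hab : a = b
      · subst hab
        have hne' : u ≠ v := fun he => hne (by rw [he])
        have := ih h hne'
        simp only [hdist] at this
        cases a <;> simp_all
      · cases a <;> cases b <;> simp_all

/-- first-true decomposition -/
lemma exists_decomp (u : List Bool) (h : u.count true ≠ 0) :
    ∃ a t, u = List.replicate a false ++ true :: t := by
  induction u with
  | nil => simp at h
  | cons b u ih =>
    cases b with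
    | true => exact ⟨0, u, rfl⟩
    | false =>
      simp only [List.count_cons, if_neg] at h
      obtain ⟨a, t, ht⟩ := ih (by simpa using h)
      exact ⟨a + 1, t, by rw [List.replicate_succ, List.cons_append, ht]⟩

lemma infix_of_infix_replicate_append {l t : List Bool} (m : ℕ)
    (hl : l ≠ []) (hh : l.head hl = true)
    (h : l <:+: List.replicate m false ++ t) : l <:+: t := by
  induction m with
  | zero => simpa using h
  | succ k ih =>
    rw [List.replicate_succ, List.cons_append, List.infix_cons_iff] at h
    rcases h with h | h
    · exfalso
      rcases l with _ | ⟨b, l⟩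
      · exact hl rfl
      · obtain ⟨s, hs⟩ := h
        simp only [List.cons_append, List.cons.injEq] at hs
        simp [hs.1] at hh
    · exact ih h




lemma word_length (p r j n : ℕ) : (word p r j n).length = n := by simp [word]

lemma word_get (p r j n : ℕ) (i : ℕ) (hi : i < n) :
    (word p r j n)[i]'(by simp [word_length, hi]) = chi p r (i + j) := by
  simp [word]

lemma infix_index {α} [Inhabited α] {l L : List α} (h : l <:+: L) :
    ∃ m, m + l.length ≤ L.length ∧
      ∀ i, i < l.length → L.getD (m + i) default = l.getD i default := by
  obtain ⟨s, e, hse⟩ := h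
  refine ⟨s.length, by rw [← hse]; simp [List.length_append], fun i hi => ?_⟩

  rw [← hse]
  rw [List.append_assoc]
  rw [List.getD_eq_getElem?_getD, List.getElem?_append_right (by omega)]
  simp only [Nat.add_sub_cancel_left]
  rw [List.getElem?_append_left hi]
  rw [List.getD_eq_getElem?_getD]

lemma chi_gap (p r : ℕ) (hp : 2 ≤ p) (hr : 1 ≤ r) (x d : ℕ)
    (hx : chi p r x = true) (hy : chi p r (x + d) = true)
    (hd : (1 ≤ d ∧ d + 1 ≤ p) ∨ d = p * r) : False := by
  have hN : 0 < p * r + 1 := by positivity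
  set N := p * r + 1 with hNdef
  have hpN : p ≤ p * r := Nat.le_mul_of_pos_right p hr
  have hdN : d < N := by rcases hd with ⟨h1, h2⟩ | h <;> omega
  simp only [chi, decide_eq_true_eq] at hx hy
  obtain ⟨hxp, hxlt⟩ := hx
  obtain ⟨hyp, hylt⟩ := hy
  set c := x % N with hc
  set c' := (x + d) % N with hc'
  have hcN : c < N := Nat.mod_lt _ hN
  have hmod : c' = (c + d) % N := by
    rw [hc', hc, Nat.add_mod x d N, Nat.mod_eq_of_lt hdN]
  obtain ⟨u, hu⟩ : p ∣ c := Nat.dvd_of_mod_eq_zero hxp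
  obtain ⟨v, hv⟩ : p ∣ c' := Nat.dvd_of_mod_eq_zero hyp
  have hur : u < r := by
    by_contra hcon
    push_neg at hcon
    have : p * r ≤ p * u := Nat.mul_le_mul_left p hcon
    omega
  have hvr : v < r := by
    by_contra hcon
    push_neg at hcon
    have : p * r ≤ p * v := Nat.mul_le_mul_left p hcon
    omega
  have hur' : p * u + p ≤ p * r := by
    have : p * (u + 1) ≤ p * r := Nat.mul_le_mul_left p hur
    rw [Nat.mul_add, Nat.mul_one] at this
    exact this
  have hcase : c' = c + d ∨ c + d = c' + N := by
    rcases Nat.lt_or_ge (c + d) N with h | h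
    · left; rw [hmod, Nat.mod_eq_of_lt h]
    · right
      have h2 : c + d - N < N := by omega
      rw [hmod, Nat.mod_eq_sub_mod h, Nat.mod_eq_of_lt h2]
      omega
  rcases hcase with heq | heq
  · rcases hd with ⟨hd1, hd2⟩ | hdr
    · -- c' = c + d, 1 ≤ d ≤ p - 1 : both multiples of p differing by d < p
      have huv : u < v := by
        have : p * u < p * v := by omega
        exact Nat.lt_of_mul_lt_mul_left this
      have : p * (u + 1) ≤ p * v := Nat.mul_le_mul_left p huv
      rw [Nat.mul_add, Nat.mul_one] at this
      omega
    · omega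
  · rcases hd with ⟨hd1, hd2⟩ | hdr
    · omega
    · -- c = c' + 1 : multiples of p differing by 1, p ≥ 2
      have hvu : v < u := by
        have : p * v < p * u := by omega
        exact Nat.lt_of_mul_lt_mul_left this
      have : p * (v + 1) ≤ p * u := Nat.mul_le_mul_left p hvu
      rw [Nat.mul_add, Nat.mul_one] at this
      omega



lemma word_getD (p r j n : ℕ) (x : ℕ) (hx : x < n) :
    (word p r j n).getD x false = chi p r (x + j) := by
  rw [List.getD_eq_getElem _ _ (by simp [word_length, hx])]
  exact word_get p r j n x hx

lemma flatten_replicate_block_length (p k : ℕ) (hp : 1 ≤ p) :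
    ((List.replicate k (true :: List.replicate (p - 1) false)).flatten).length = k * p := by
  induction k with
  | zero => simp
  | succ m ih =>
    rw [List.replicate_succ, List.flatten_cons, List.length_append, ih]
    simp only [List.length_cons, List.length_replicate]
    rw [Nat.succ_mul]
    omega

lemma pat2_getD_zero (p r : ℕ) (hr : 1 ≤ r) :
    (((List.replicate r (true :: List.replicate (p - 1) false)).flatten ++ [true]) :
      List Bool).getD 0 false = true := by
  obtain ⟨r', rfl⟩ : ∃ r', r = r' + 1 := ⟨r - 1, by omega⟩
  rw [List.replicate_succ, List.flatten_cons]
  simp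

lemma pat2_getD_last (p r : ℕ) (hp : 1 ≤ p) :
    (((List.replicate r (true :: List.replicate (p - 1) false)).flatten ++ [true]) :
      List Bool).getD (r * p) false = true := by
  rw [List.getD_eq_getElem?_getD, List.getElem?_append_right
    (by rw [flatten_replicate_block_length p r hp])]
  rw [flatten_replicate_block_length p r hp]
  simp

lemma pat2_length (p r : ℕ) (hp : 1 ≤ p) :
    (((List.replicate r (true :: List.replicate (p - 1) false)).flatten ++ [true]) :
      List Bool).length = r * p + 1 := by
  rw [List.length_append, flatten_replicate_block_length p r hp]
  simp

lemma word_OCode (p r j n : ℕ) (hp : 2 ≤ p) (hr : 1 ≤ r) : OCode p r (word p r j n) := by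
  constructor
  · intro hinf
    obtain ⟨m, hm, hget⟩ := infix_index hinf
    rw [pat2_length p r (by omega), word_length] at hm
    have h0 := hget 0 (by rw [pat2_length p r (by omega)]; omega)
    have h1 := hget (r * p) (by rw [pat2_length p r (by omega)]; omega)
    simp only [show (default : Bool) = false from rfl] at h0 h1
    rw [pat2_getD_zero p r hr] at h0
    rw [pat2_getD_last p r (by omega)] at h1
    rw [Nat.add_zero, word_getD p r j n m (by omega)] at h0
    rw [word_getD p r j n (m + r * p) (by omega)] at h1
    have h1' : chi p r ((m + j) + p * r) = true := by
      rw [show (m + j) + p * r = m + r * p + j by ring]; exact h1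
    exact chi_gap p r hp hr (m + j) (p * r) h0 h1' (Or.inr rfl)
  · intro s hs hinf
    obtain ⟨m, hm, hget⟩ := infix_index hinf
    have hlen : (true :: (List.replicate s false ++ [true]) : List Bool).length = s + 2 := by
      simp
    rw [hlen, word_length] at hm
    have h0 := hget 0 (by rw [hlen]; omega)
    have h1 := hget (s + 1) (by rw [hlen]; omega)
    simp only [show (default : Bool) = false from rfl] at h0 h1
    have e0 : (true :: (List.replicate s false ++ [true]) : List Bool).getD 0 false = true := rfl
    have e1 : (true :: (List.replicate s false ++ [true]) : List Bool).getD (s + 1) false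
        = true := by
      rw [List.getD_cons_succ, List.getD_eq_getElem?_getD,
        List.getElem?_append_right (by simp)]
      simp
    rw [e0] at h0
    rw [e1] at h1
    rw [Nat.add_zero, word_getD p r j n m (by omega)] at h0
    rw [word_getD p r j n (m + (s + 1)) (by omega)] at h1
    have h1' : chi p r ((m + j) + (s + 1)) = true := by
      rw [show (m + j) + (s + 1) = m + (s + 1) + j by ring]; exact h1
    exact chi_gap p r hp hr (m + j) (s + 1) h0 h1' (Or.inl ⟨by omega, by omega⟩)


lemma OCode_infix {p r : ℕ} {w l : List Bool} (h : OCode p r w) (hl : l <:+: w) :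
    OCode p r l :=
  ⟨fun hc => h.1 (hc.trans hl), fun s hs hc => h.2 s hs (hc.trans hl)⟩

lemma gap_decomp {p r : ℕ} {t : List Bool} (h : OCode p r (true :: t))
    (ht : t.count true ≠ 0) :
    ∃ s t', t = List.replicate s false ++ true :: t' ∧ p - 1 ≤ s := by
  obtain ⟨s, t', rfl⟩ := exists_decomp t ht
  refine ⟨s, t', rfl, ?_⟩
  by_contra hcon
  push_neg at hcon
  refine h.2 s (by omega) ?_
  refine List.IsPrefix.isInfix ⟨t', ?_⟩
  simp

lemma suffix_true_OCode {p r : ℕ} {w : List Bool} (h : OCode p r w) (a : ℕ) (t : List Bool)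
    (hw : w = List.replicate a false ++ true :: t) : OCode p r (true :: t) :=
  OCode_infix h (List.IsSuffix.isInfix ⟨List.replicate a false, hw.symm⟩)

lemma count_cons_true (t : List Bool) : (true :: t).count true = 1 + t.count true := by
  simp [List.count_cons, Nat.add_comm]

lemma count_true_decomp (a : ℕ) (t : List Bool) :
    (List.replicate a false ++ true :: t).count true = 1 + t.count true := by
  rw [List.count_append, List.count_replicate]
  simp [List.count_cons]
  omega

/-- C4a : many ones force length -/
lemma ones_force_length {p r : ℕ} (hp : 2 ≤ p) (k : ℕ) :
    ∀ w : List Bool, OCode p r w → k + 1 ≤ w.count true → k * p + 1 ≤ w.length := by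
  induction k with
  | zero =>
    intro w _ hc
    have := List.count_le_length (l := w) (a := true)
    omega
  | succ m ih =>
    intro w hw hc
    obtain ⟨a, t, rfl⟩ := exists_decomp w (by omega)
    have hcw := count_true_decomp a t
    have hvt : OCode p r (true :: t) := suffix_true_OCode hw a t rfl
    obtain ⟨s, t', rfl, hs⟩ := gap_decomp hvt (by omega)
    have hv' : OCode p r (true :: t') :=
      OCode_infix hvt (List.IsSuffix.isInfix ⟨true :: List.replicate s false, by simp⟩)
    have hct' := count_true_decomp s t'
    have hih := ih (true :: t') hv' (by rw [count_cons_true]; omega)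
    simp only [List.length_append, List.length_replicate, List.length_cons] at hih ⊢
    rw [Nat.succ_mul]
    omega

/-- C4b : prefix pattern bound -/
lemma prefix_pattern_bound {p r : ℕ} (hp : 2 ≤ p) (k : ℕ) :
    ∀ t : List Bool, OCode p r (true :: t) → k + 1 ≤ (true :: t).count true →
      ¬ (((List.replicate k (true :: List.replicate (p - 1) false)).flatten ++ [true])
          <+: (true :: t)) →
      k * p + 2 ≤ (true :: t).length := by
  induction k with
  | zero =>
    intro t _ _ hpre
    exact absurd ⟨t, by simp⟩ hpre
  | succ m ih =>
    intro t hw hc hpre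
    have hct : t.count true ≠ 0 := by simp [List.count_cons] at hc ⊢; omega
    obtain ⟨s, t', rfl, hs⟩ := gap_decomp hw hct
    have hv' : OCode p r (true :: t') :=
      OCode_infix hw (List.IsSuffix.isInfix ⟨true :: List.replicate s false, by simp⟩)
    have hcv' : m + 1 ≤ (true :: t').count true := by
      have h1 := count_true_decomp s t'
      simp [List.count_cons] at hc h1 ⊢
      omega
    rcases Nat.lt_or_ge s p with hsp | hsp
    · -- s = p - 1 : extend pattern
      have hse : s = p - 1 := by omega
      subst hse
      have hpre' : ¬ (((List.replicate m (true :: List.replicate (p - 1) false)).flatten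
          ++ [true]) <+: (true :: t')) := by
        intro ⟨e, he⟩
        refine hpre ⟨e, ?_⟩
        rw [List.replicate_succ, List.flatten_cons]
        simp only [List.cons_append, List.append_assoc] at he ⊢
        rw [he]
      have hih := ih t' hv' hcv' hpre'
      simp only [List.length_cons, List.length_append, List.length_replicate] at hih ⊢
      rw [Nat.succ_mul]
      omega
    · -- s ≥ p
      have hih := ones_force_length hp m (true :: t') hv' hcv'
      simp only [List.length_cons, List.length_append, List.length_replicate] at hih ⊢
      rw [Nat.succ_mul]
      omega

/-- C4 : short valid words have few ones -/
lemma count_le_r {p r : ℕ} (hp : 2 ≤ p) (hr : 1 ≤ r) {w : List Bool} (hw : OCode p r w)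
    (hlen : w.length ≤ p * r + 1) : w.count true ≤ r := by
  by_contra hcon
  push_neg at hcon
  obtain ⟨a, t, rfl⟩ := exists_decomp w (by omega)
  have hv : OCode p r (true :: t) := suffix_true_OCode hw a t rfl
  have hcw := count_true_decomp a t
  have hpre : ¬ (((List.replicate r (true :: List.replicate (p - 1) false)).flatten ++ [true])
      <+: (true :: t)) := by
    intro hp2
    exact hw.1 (hp2.isInfix.trans (List.IsSuffix.isInfix ⟨List.replicate a false, rfl⟩))
  have := prefix_pattern_bound hp r t hv (by simp [List.count_cons]; omega) hpre
  simp only [List.length_append, List.length_replicate, List.length_cons] at *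
  have : r * p = p * r := by ring
  omega

/-- C3 : ones at density at most 1/p (multiplied-out form) -/
lemma count_mul_p_le {p r : ℕ} (hp : 2 ≤ p) :
    ∀ L, ∀ w : List Bool, OCode p r w → w.length ≤ L →
      w.count true * p ≤ w.length + p - 1 := by
  intro L
  induction L with
  | zero =>
    intro w _ hl
    have := List.count_le_length (l := w) (a := true)
    have h0 : w.count true = 0 := by omega
    rw [h0, Nat.zero_mul]
    omega
  | succ M ih =>
    intro w hw hl
    by_cases hc : w.count true = 0
    · rw [hc, Nat.zero_mul]; omega
    obtain ⟨a, t, rfl⟩ := exists_decomp w hc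
    have hcw := count_true_decomp a t
    have hv : OCode p r (true :: t) := suffix_true_OCode hw a t rfl
    by_cases hct : t.count true = 0
    · -- single one
      have hone : (List.replicate a false ++ true :: t).count true = 1 := by omega
      rw [hone, Nat.one_mul]
      simp only [List.length_append, List.length_replicate, List.length_cons]
      omega
    · obtain ⟨s, t', rfl, hs⟩ := gap_decomp hv hct
      have hv' : OCode p r (true :: t') :=
        OCode_infix hv (List.IsSuffix.isInfix ⟨true :: List.replicate s false, by simp⟩)
      have hct' := count_true_decomp s t'
      have hlt : (true :: t').length ≤ M := by
        simp only [List.length_append, List.length_replicate, List.length_cons] at hl ⊢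
        omega
      have hih := ih (true :: t') hv' hlt
      rw [count_cons_true,
        show (1 + List.count true t') * p = p + List.count true t' * p by ring] at hih
      rw [hcw, hct',
        show (1 + (1 + List.count true t')) * p = p + p + List.count true t' * p by ring]
      simp only [List.length_append, List.length_replicate, List.length_cons] at hih ⊢
      omega

/-- C2 : main counting upper bound -/
lemma count_mul_le {p r : ℕ} (hp : 2 ≤ p) (hr : 1 ≤ r) :
    ∀ L, ∀ w : List Bool, OCode p r w → w.length ≤ L →
      w.count true * (p * r + 1) ≤ w.length * r + p * r := by
  intro L
  induction L with
  | zero =>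
    intro w _ hl
    have hnil : w = [] := List.eq_nil_of_length_eq_zero (by omega)
    subst hnil
    simp
  | succ M ih =>
    intro w hw hl
    rcases Nat.lt_or_ge w.length (p * r + 1) with hshort | hlong
    · -- short case
      have hcp := count_mul_p_le hp (L := w.length) w hw le_rfl
      have hcd : w.count true ≤ (w.length + p - 1) / p :=
        (Nat.le_div_iff_mul_le (by omega : 0 < p)).mpr hcp
      have hdm : ((w.length + p - 1) / p) * (p * r + 1) ≤ w.length * r + p * r := by
        rw [← cid2 p r w.length hp hr (by omega)]
        exact Nat.div_mul_le_self _ _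
      calc w.count true * (p * r + 1) ≤ ((w.length + p - 1) / p) * (p * r + 1) :=
            Nat.mul_le_mul_right _ hcd
        _ ≤ w.length * r + p * r := hdm
    · -- long case : split off first N letters
      set N := p * r + 1 with hN
      have hsplit := List.take_append_drop N w
      have hlent : (List.take N w).length = N := by
        rw [List.length_take]
        omega
      have hlend : (List.drop N w).length = w.length - N := by
        rw [List.length_drop]
      have hcnt : w.count true = (List.take N w).count true + (List.drop N w).count true := by
        conv_lhs => rw [← hsplit]
        rw [List.count_append]
      have htake : OCode p r (List.take N w) :=
        OCode_infix hw (List.IsPrefix.isInfix (List.take_prefix N w))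
      have hdrop : OCode p r (List.drop N w) :=
        OCode_infix hw (List.IsSuffix.isInfix (List.drop_suffix N w))
      have hc1 : (List.take N w).count true ≤ r := count_le_r hp hr htake (by omega)
      have hih := ih (List.drop N w) hdrop (by omega)
      rw [hlend] at hih
      have hsub : (w.length - N) * r + N * r = w.length * r := by
        rw [← Nat.add_mul, Nat.sub_add_cancel hlong]
      have hc1N : (List.take N w).count true * N ≤ r * N := Nat.mul_le_mul_right _ hc1
      have hrN : r * N = N * r := by ring
      rw [hcnt, Nat.add_mul]
      omega

lemma infix_true_cons {l' t : List Bool} (m : ℕ)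
    (h : (true :: l') <:+: List.replicate m false ++ t) : (true :: l') <:+: t := by
  induction m with
  | zero => simpa using h
  | succ k ih =>
    rw [List.replicate_succ, List.cons_append, List.infix_cons_iff] at h
    rcases h with h | h
    · obtain ⟨e, he⟩ := h
      simp only [List.cons_append, List.cons.injEq] at he
      exact absurd he.1 (by simp)
    · exact ih h

lemma pat2_cons (p r : ℕ) :
    ∃ rest, ((List.replicate r (true :: List.replicate (p - 1) false)).flatten ++ [true])
      = true :: rest := by
  cases r with
  | zero => exact ⟨[], rfl⟩
  | succ m =>
    refine ⟨List.replicate (p - 1) false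
      ++ ((List.replicate m (true :: List.replicate (p - 1) false)).flatten ++ [true]), ?_⟩
    rw [List.replicate_succ, List.flatten_cons]
    simp

lemma zero_OCode (p r n : ℕ) : OCode p r (List.replicate n false) := by
  constructor
  · intro h
    have hmem : true ∈ ((List.replicate r (true :: List.replicate (p - 1) false)).flatten
        ++ [true]) := by simp
    have := h.subset hmem
    exact absurd (List.eq_of_mem_replicate this) (by simp)
  · intro s hs h
    have hmem : true ∈ (true :: (List.replicate s false ++ [true])) := by simp
    have := h.subset hmem
    exact absurd (List.eq_of_mem_replicate this) (by simp)

def zvert (p r n : ℕ) : OVert p r n := ⟨List.replicate n false, by simp, zero_OCode p r n⟩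

lemma drop_one_OCode {p r : ℕ} {w : List Bool} (h : OCode p r w) (a : ℕ) (t : List Bool)
    (hw : w = List.replicate a false ++ true :: t) :
    OCode p r (List.replicate (a + 1) false ++ t) := by
  have htsuf : t <:+: w := by
    rw [hw]
    exact List.IsSuffix.isInfix ⟨List.replicate a false ++ [true], by simp⟩
  constructor
  · intro hinf
    obtain ⟨rest, hrest⟩ := pat2_cons p r
    rw [hrest] at hinf
    exact h.1 (by rw [hrest]; exact (infix_true_cons (a + 1) hinf).trans htsuf)
  · intro s hs hinf
    exact h.2 s hs ((infix_true_cons (a + 1) hinf).trans htsuf)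

lemma hdist_self (t : List Bool) : hdist t t = 0 := count_zipWith_bne_self t

lemma hdist_drop_one (a : ℕ) (t : List Bool) :
    hdist (List.replicate a false ++ true :: t) (List.replicate (a + 1) false ++ t) = 1 := by
  have he : List.replicate (a + 1) false ++ t
      = List.replicate a false ++ false :: t := by
    rw [List.replicate_succ', List.append_assoc]
    rfl
  rw [he, hdist, List.zipWith_append (by simp : (List.replicate a false).length = (List.replicate a false).length), List.count_append]
  rw [count_zipWith_bne_self]
  simp only [List.zipWith_cons_cons]
  rw [show (true != false) = true from rfl]
  rw [List.count_cons, count_zipWith_bne_self]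
  simp

lemma walk_from_zero (p r n : ℕ) :
    ∀ k (u : OVert p r n), u.1.count true ≤ k →
      ∃ w : (OGraph p r n).Walk (zvert p r n) u, w.length ≤ u.1.count true := by
  intro k
  induction k with
  | zero =>
    intro u hu
    have h0 : u.1.count true = 0 := by omega
    have hrep : u.1 = List.replicate n false := by
      rw [List.eq_replicate_iff]
      refine ⟨u.2.1, fun b hb => ?_⟩
      cases b
      · rfl
      · exact absurd hb (List.count_eq_zero.mp h0)
    have : zvert p r n = u := Subtype.ext hrep.symm
    subst this
    exact ⟨SimpleGraph.Walk.nil, by simp⟩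
  | succ k ih =>
    intro u hu
    by_cases h0 : u.1.count true = 0
    · have hrep : u.1 = List.replicate n false := by
        rw [List.eq_replicate_iff]
        refine ⟨u.2.1, fun b hb => ?_⟩
        cases b
        · rfl
        · exact absurd hb (List.count_eq_zero.mp h0)
      have : zvert p r n = u := Subtype.ext hrep.symm
      subst this
      exact ⟨SimpleGraph.Walk.nil, by simp⟩
    · obtain ⟨a, t, hat⟩ := exists_decomp u.1 h0
      have hlen : (List.replicate (a + 1) false ++ t).length = n := by
        have := u.2.1
        rw [hat] at this
        simp only [List.length_append, List.length_replicate, List.length_cons] at this ⊢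
        omega
      set u' : OVert p r n := ⟨List.replicate (a + 1) false ++ t, hlen,
        drop_one_OCode u.2.2 a t hat⟩ with hu'
      have hcnt : u.1.count true = 1 + u'.1.count true := by
        rw [hat, count_true_decomp]
        simp [hu', List.count_append, List.count_replicate]
      have hd : hdist u.1 u'.1 = 1 := by
        rw [hat]
        exact hdist_drop_one a t
      have hne : u' ≠ u := by
        intro heq
        rw [heq, hdist_self] at hd
        exact absurd hd (by simp)
      have hadj : (OGraph p r n).Adj u' u := by
        rw [OGraph, SimpleGraph.fromRel_adj]
        exact ⟨hne, Or.inr hd⟩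
      obtain ⟨w', hw'⟩ := ih u' (by omega)
      exact ⟨w'.concat hadj, by rw [SimpleGraph.Walk.length_concat]; omega⟩

lemma walk_hdist_le (p r n : ℕ) :
    ∀ {u v : OVert p r n} (w : (OGraph p r n).Walk u v), hdist u.1 v.1 ≤ w.length := by
  intro u v w
  induction w with
  | nil => simp [hdist_self]
  | @cons a b c hadj w ih =>
    have h1 : hdist a.1 b.1 = 1 := by
      rw [OGraph, SimpleGraph.fromRel_adj] at hadj
      rcases hadj.2 with h | h
      · exact h
      · rw [hdist_comm]; exact h
    calc hdist a.1 c.1 ≤ hdist a.1 b.1 + hdist b.1 c.1 :=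
          hdist_triangle a.1 b.1 c.1 (by rw [a.2.1, b.2.1]) (by rw [b.2.1, c.2.1])
      _ ≤ 1 + w.length := by rw [h1]; exact Nat.add_le_add_left ih 1
      _ = (SimpleGraph.Walk.cons hadj w).length := by
          rw [SimpleGraph.Walk.length_cons]; omega

lemma reachable_zero (p r n : ℕ) (u : OVert p r n) :
    (OGraph p r n).Reachable (zvert p r n) u := by
  obtain ⟨w, _⟩ := walk_from_zero p r n (u.1.count true) u le_rfl
  exact ⟨w⟩

lemma dist_zero_eq (p r n : ℕ) (u : OVert p r n) :
    (OGraph p r n).dist (zvert p r n) u = u.1.count true := by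
  refine le_antisymm ?_ ?_
  · obtain ⟨w, hw⟩ := walk_from_zero p r n (u.1.count true) u le_rfl
    exact le_trans (SimpleGraph.dist_le w) hw
  · obtain ⟨w, hw⟩ := (reachable_zero p r n u).exists_walk_length_eq_dist
    have := walk_hdist_le p r n w
    rw [hw] at this
    simp only [zvert] at this
    rwa [hdist_replicate_false u.1 n u.2.1] at this

lemma hdist_sum : ∀ (u w : List Bool), u.length = w.length →
    hdist u w = ∑ i ∈ Finset.range u.length,
      (if u.getD i false ≠ w.getD i false then 1 else 0) := by
  intro u
  induction u with
  | nil => intro w h; simp [hdist]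
  | cons a u ih =>
    intro w h
    cases w with
    | nil => simp at h
    | cons b w =>
      simp only [List.length_cons, Nat.add_right_cancel_iff] at h
      have hrec := ih w h
      rw [List.length_cons, Finset.sum_range_succ']
      simp only [List.getD_cons_succ, List.getD_cons_zero]
      rw [← hrec]
      show hdist (a :: u) (b :: w) = hdist u w + _
      rw [hdist, hdist, List.zipWith_cons_cons, List.count_cons]
      cases a <;> cases b <;> simp

lemma chi_mod (p r x : ℕ) : chi p r x = chi p r (x % (p * r + 1)) := by
  simp only [chi, Nat.mod_mod_of_dvd _ (dvd_refl (p * r + 1))]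

lemma chi_window (p r : ℕ) (hp : 2 ≤ p) (hr : 1 ≤ r) (i : ℕ) :
    ∑ j ∈ Finset.range (p * r + 1), (if chi p r (i + j) = true then 1 else 0) = r := by
  have hN : 0 < p * r + 1 := by positivity
  set N := p * r + 1 with hNdef
  obtain ⟨q, m, hdm, hm⟩ : ∃ q m, i = N * q + m ∧ m < N :=
    ⟨i / N, i % N, by rw [Nat.div_add_mod], Nat.mod_lt _ hN⟩
  have hmod : i % N = m := by
    rw [hdm]; simp [Nat.mul_add_mod, Nat.mod_eq_of_lt hm]
  have key : ∑ j ∈ Finset.range N, (if chi p r (i + j) = true then 1 else 0)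
      = ∑ c ∈ Finset.range N, (if chi p r c = true then 1 else 0) := by
    refine Finset.sum_nbij' (fun j => (i + j) % N) (fun c => (c + (N - i % N)) % N)
      (fun a ha => Finset.mem_range.mpr (Nat.mod_lt _ hN))
      (fun c hc => Finset.mem_range.mpr (Nat.mod_lt _ hN)) ?_ ?_ ?_
    · intro j hj
      have hjlt : j < N := Finset.mem_range.mp hj
      rw [hmod]
      have h2 : (i + j) + (N - m) = N * (q + 1) + j := by
        have he : N * (q + 1) = N * q + N := by ring
        omega
      calc ((i + j) % N + (N - m)) % N = ((i + j) + (N - m)) % N :=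
            Nat.mod_add_mod _ _ _
        _ = (N * (q + 1) + j) % N := by rw [h2]
        _ = j % N := Nat.mul_add_mod _ _ _
        _ = j := Nat.mod_eq_of_lt hjlt
    · intro c hc
      have hclt : c < N := Finset.mem_range.mp hc
      rw [hmod]
      have h2 : i + (c + (N - m)) = N * (q + 1) + c := by
        have he : N * (q + 1) = N * q + N := by ring
        omega
      calc (i + (c + (N - m)) % N) % N = (i + (c + (N - m))) % N :=
            Nat.add_mod_mod _ _ _
        _ = (N * (q + 1) + c) % N := by rw [h2]
        _ = c % N := Nat.mul_add_mod _ _ _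
        _ = c := Nat.mod_eq_of_lt hclt
    · intro j hj
      rw [chi_mod p r (i + j), ← hNdef]
  rw [key]
  have hcnt : ∑ c ∈ Finset.range N, (if chi p r c = true then 1 else 0)
      = (word p r 0 N).count true := by
    rw [word]
    induction N with
    | zero => simp
    | succ M ihM =>
      rw [Finset.sum_range_succ, List.range_succ, List.map_append, List.count_append, ihM]
      cases h : chi p r M <;> simp [h]
  rw [hcnt, word_count p r N hp hr, hNdef, Nat.mul_add_div (by positivity),
    Nat.div_eq_of_lt (by omega)]
  omega

lemma exists_far (p r n : ℕ) (hp : 2 ≤ p) (hr : 1 ≤ r) (hn : 1 ≤ n) (v : OVert p r n) :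
    ∃ j, (n * r + p * r) / (p * r + 1) ≤ hdist v.1 (word p r j n) := by
  have hN : 0 < p * r + 1 := by positivity
  set N := p * r + 1 with hNdef
  obtain ⟨R, hR⟩ : ∃ R, R = (n * r + p * r) / N := ⟨_, rfl⟩
  rw [← hR]
  by_contra hcon
  push_neg at hcon
  have hv : v.1.length = n := v.2.1
  have hdsum : ∀ j, hdist v.1 (word p r j n)
      = ∑ i ∈ Finset.range n, (if v.1.getD i false ≠ (word p r j n).getD i false
          then 1 else 0) := by
    intro j
    rw [hdist_sum v.1 (word p r j n) (by rw [hv, word_length]), hv]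
  have hinner : ∀ i ∈ Finset.range n,
      r ≤ ∑ j ∈ Finset.range N, (if v.1.getD i false ≠ (word p r j n).getD i false
          then 1 else 0) := by
    intro i hi
    have hilt : i < n := Finset.mem_range.mp hi
    have hrw : ∀ j, (word p r j n).getD i false = chi p r (i + j) :=
      fun j => word_getD p r j n i hilt
    cases hvi : v.1.getD i false
    · refine le_trans (le_of_eq (chi_window p r hp hr i).symm) (le_of_eq ?_)
      refine Finset.sum_congr rfl fun j _ => ?_
      rw [hrw j]
      cases chi p r (i + j) <;> simp
    · have hsplit : (∑ j ∈ Finset.range N, (if (true : Bool) ≠ (word p r j n).getD i false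
            then 1 else 0))
          + (∑ j ∈ Finset.range N, (if chi p r (i + j) = true then 1 else 0))
          = N := by
        rw [← Finset.sum_add_distrib]
        have hone : ∀ j ∈ Finset.range N, ((if (true : Bool) ≠ (word p r j n).getD i false
            then 1 else 0) + (if chi p r (i + j) = true then 1 else 0)) = 1 := by
          intro j _
          rw [hrw j]
          cases chi p r (i + j) <;> simp
        rw [Finset.sum_congr rfl hone, Finset.sum_const, Finset.card_range, smul_eq_mul,
          Nat.mul_one]
      rw [chi_window p r hp hr i] at hsplit
      have h2r : 2 * r ≤ p * r := Nat.mul_le_mul_right r hp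
      omega
  have htot : n * r ≤ ∑ j ∈ Finset.range N, hdist v.1 (word p r j n) := by
    have h1 : ∑ j ∈ Finset.range N, hdist v.1 (word p r j n)
        = ∑ i ∈ Finset.range n, ∑ j ∈ Finset.range N,
            (if v.1.getD i false ≠ (word p r j n).getD i false then 1 else 0) := by
      rw [Finset.sum_congr rfl (fun j _ => hdsum j)]
      exact Finset.sum_comm
    rw [h1]
    calc n * r = ∑ _i ∈ Finset.range n, r := by
          rw [Finset.sum_const, Finset.card_range, smul_eq_mul]
      _ ≤ _ := Finset.sum_le_sum hinner
  have hub : ∑ j ∈ Finset.range N, hdist v.1 (word p r j n) ≤ N * (R - 1) := by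
    calc ∑ j ∈ Finset.range N, hdist v.1 (word p r j n)
        ≤ ∑ _j ∈ Finset.range N, (R - 1) :=
          Finset.sum_le_sum (fun j _ => by have := hcon j; omega)
      _ = N * (R - 1) := by rw [Finset.sum_const, Finset.card_range, smul_eq_mul]
  have hR1 : 1 ≤ R := by
    rw [hR, Nat.le_div_iff_mul_le hN]
    have : 1 * 1 ≤ n * r := Nat.mul_le_mul hn hr
    omega
  have hRN : R * N ≤ n * r + p * r := by
    rw [hR]
    exact Nat.div_mul_le_self _ _
  have hNR : N * (R - 1) + N = N * R := by
    have h1 : R - 1 + 1 = R := by omega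
    calc N * (R - 1) + N = N * ((R - 1) + 1) := by rw [Nat.mul_add, Nat.mul_one]
      _ = N * R := by rw [h1]
  have hcomm : R * N = N * R := by ring
  omega

def wvert (p r n : ℕ) (hp : 2 ≤ p) (hr : 1 ≤ r) (j : ℕ) : OVert p r n :=
  ⟨word p r j n, word_length p r j n, word_OCode p r j n hp hr⟩

lemma count_le_R (p r n : ℕ) (hp : 2 ≤ p) (hr : 1 ≤ r) (u : OVert p r n) :
    u.1.count true ≤ (n * r + p * r) / (p * r + 1) := by
  rw [Nat.le_div_iff_mul_le (by positivity)]
  have := count_mul_le hp hr u.1.length u.1 u.2.2 le_rfl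
  rwa [u.2.1] at this

lemma dist_le_2n (p r n : ℕ) (v u : OVert p r n) :
    (OGraph p r n).dist v u ≤ n + n := by
  obtain ⟨w1, hw1⟩ := walk_from_zero p r n (v.1.count true) v le_rfl
  obtain ⟨w2, hw2⟩ := walk_from_zero p r n (u.1.count true) u le_rfl
  have hle := SimpleGraph.dist_le (w1.reverse.append w2)
  rw [SimpleGraph.Walk.length_append, SimpleGraph.Walk.length_reverse] at hle
  have hc1 : v.1.count true ≤ n := by
    have := List.count_le_length (l := v.1) (a := true)
    rw [v.2.1] at this
    exact this
  have hc2 : u.1.count true ≤ n := by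
    have := List.count_le_length (l := u.1) (a := true)
    rw [u.2.1] at this
    exact this
  omega

lemma ecc_ge (p r n : ℕ) (hp : 2 ≤ p) (hr : 1 ≤ r) (hn : 1 ≤ n) (v : OVert p r n) :
    (n * r + p * r) / (p * r + 1) ≤ ecc (OGraph p r n) v := by
  obtain ⟨j, hj⟩ := exists_far p r n hp hr hn v
  set u : OVert p r n := wvert p r n hp hr j with hu
  have hdist_ge : (n * r + p * r) / (p * r + 1) ≤ (OGraph p r n).dist v u := by
    have hreach : (OGraph p r n).Reachable v u :=
      ((reachable_zero p r n v).symm).trans (reachable_zero p r n u)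
    obtain ⟨w, hw⟩ := hreach.exists_walk_length_eq_dist
    have := walk_hdist_le p r n w
    rw [hw] at this
    exact le_trans hj (by exact this)
  have hbdd : BddAbove {d | ∃ u', (OGraph p r n).dist v u' = d} := by
    refine ⟨n + n, fun d hd => ?_⟩
    obtain ⟨u', hu'⟩ := hd
    rw [← hu']
    exact dist_le_2n p r n v u'
  exact le_trans hdist_ge (le_csSup hbdd ⟨u, rfl⟩)

lemma ecc_zero (p r n : ℕ) (hp : 2 ≤ p) (hr : 1 ≤ r) (hn : 1 ≤ n) :
    ecc (OGraph p r n) (zvert p r n) = (n * r + p * r) / (p * r + 1) := by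
  refine le_antisymm ?_ (ecc_ge p r n hp hr hn (zvert p r n))
  refine csSup_le ⟨0, zvert p r n, by
    rw [dist_zero_eq]
    simp [zvert, List.count_replicate]⟩ fun d hd => ?_
  obtain ⟨u, hu⟩ := hd
  rw [← hu, dist_zero_eq p r n u]
  exact count_le_R p r n hp hr u

end OGR

/-- for `p ≥ 2`, `r ≥ 1`, `rad(OΓ_n^{(p,r)}) = ⌈nr/(pr+1)⌉` and
`0^n` is a central vertex. -/
theorem OGraph_radius (p r n : ℕ) (hp : 2 ≤ p) (hr : 1 ≤ r) (hn : 1 ≤ n) :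
    grad (OGraph p r n) = (n * r + p * r) / (p * r + 1) ∧
    ∀ v : OVert p r n, v.1 = List.replicate n false →
      ecc (OGraph p r n) v = grad (OGraph p r n) := by
  have hzecc := OGR.ecc_zero p r n hp hr hn
  have hgrad : grad (OGraph p r n) = (n * r + p * r) / (p * r + 1) := by
    refine le_antisymm (Nat.sInf_le ⟨OGR.zvert p r n, hzecc⟩) ?_
    refine le_csInf ⟨_, OGR.zvert p r n, hzecc⟩ ?_
    rintro e ⟨v, rfl⟩
    exact OGR.ecc_ge p r n hp hr hn v
  refine ⟨hgrad, fun v hv => ?_⟩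
  have hvz : v = OGR.zvert p r n := Subtype.ext hv
  rw [hvz, hzecc, hgrad]
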